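/- arXiv:math/0305004 — 6 statements merged into one kernel-verified Lean document; each statement's English description precedes it below -/
import Mathlib

section
/- The determinant of the n×n Cauchy matrix C with entries C_{ij} = 1/(x_i + y_j) equals (∏_{1≤i<j≤n} (x_j - x_i)(y_j - y_i)) / (∏_{1≤i,j≤n} (x_i + y_j)). -/
open Finset Matrix

/-- Reindexing of a filtered product over `Fin (n+1)` with condition `i.succ < j`. -/
lemma cauchyAux_filter_succ (n : ℕ) (i : Fin n) (g : Fin (n + 1) → ℝ) :
    ∏ j ∈ Finset.univ.filter (fun j => i.succ < j), g j
      = ∏ k ∈ Finset.univ.filter (fun k => i < k), g k.succ := by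
  rw [Finset.prod_filter, Finset.prod_filter, Fin.prod_univ_succ]
  have h0 : ¬ (i.succ < (0 : Fin (n + 1))) := by
    simp [Fin.lt_iff_val_lt_val]
  rw [if_neg h0, one_mul]
  refine Finset.prod_congr rfl fun k _ => ?_
  simp [Fin.succ_lt_succ_iff]

/-- Reindexing of a filtered product over `Fin (n+1)` with condition `0 < j`. -/
lemma cauchyAux_filter_zero (n : ℕ) (g : Fin (n + 1) → ℝ) :
    ∏ j ∈ Finset.univ.filter (fun j => (0 : Fin (n + 1)) < j), g j
      = ∏ k : Fin n, g k.succ := by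
  rw [Finset.prod_filter, Fin.prod_univ_succ]
  simp [Fin.succ_pos]

/-- The key induction step : peel off the first row and column of a Cauchy matrix. -/
lemma cauchy_step (n : ℕ) (x y : Fin (n + 1) → ℝ) (h : ∀ i j, x i + y j ≠ 0) :
    (Matrix.of fun i j : Fin (n + 1) => 1 / (x i + y j)).det =
      ((∏ j : Fin n, ((x j.succ - x 0) * (y j.succ - y 0))) /
          ((∏ i, (x i + y 0)) * ∏ j : Fin n, (x 0 + y j.succ))) *
        (Matrix.of fun i j : Fin n => 1 / (x i.succ + y j.succ)).det := by
  set A : Matrix (Fin (n + 1)) (Fin (n + 1)) ℝ := Matrix.of fun i j => 1 / (x i + y j) with hA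
  set B : Matrix (Fin (n + 1)) (Fin (n + 1)) ℝ :=
    Matrix.of fun i j => if j = 0 then 1 / (x i + y 0) else 1 / (x i + y j) - 1 / (x i + y 0)
    with hB
  set E : Matrix (Fin (n + 1)) (Fin (n + 1)) ℝ :=
    Matrix.of fun i j => if j = 0 then (1 : ℝ) else 1 / (x i + y j) with hE
  set F : Matrix (Fin (n + 1)) (Fin (n + 1)) ℝ :=
    Matrix.of fun i j => if i = 0 then (if j = 0 then (1 : ℝ) else 1 / (x 0 + y j))
      else (if j = 0 then 0 else 1 / (x i + y j) - 1 / (x 0 + y j)) with hF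
  set G : Matrix (Fin (n + 1)) (Fin (n + 1)) ℝ :=
    Matrix.of fun i j => if i = 0 then (1 : ℝ) else (if j = 0 then 0 else 1 / (x i + y j))
    with hG
  -- Step 1 : subtract column 0 from the other columns
  have h1 : A.det = B.det := by
    rw [← Matrix.det_transpose A, ← Matrix.det_transpose B]
    refine Matrix.det_eq_of_forall_row_eq_smul_add_const
      (fun j => if j = 0 then 0 else 1) 0 (by simp) fun j i => ?_
    by_cases hj : j = 0 <;> simp [hA, hB, hj, Matrix.transpose_apply]
  -- Step 2 : factor rows and columns of B
  have h2 : B = Matrix.of fun i j =>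
      (1 / (x i + y 0)) * ((if j = 0 then (1 : ℝ) else y 0 - y j) * E i j) := by
    ext i j
    by_cases hj : j = 0
    · simp [hB, hE, hj]
    · simp only [hB, hE, Matrix.of_apply, if_neg hj]
      field_simp [h i j, h i 0]
      ring
  have h2' : B.det = (∏ i, 1 / (x i + y 0)) *
      ((∏ j, (if j = 0 then (1 : ℝ) else y 0 - y j)) * E.det) := by
    rw [h2]
    rw [show (Matrix.of fun i j =>
        (1 / (x i + y 0)) * ((if j = 0 then (1 : ℝ) else y 0 - y j) * E i j)) =
      Matrix.of (fun i j => (1 / (x i + y 0)) *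
        (Matrix.of fun i j => (if j = 0 then (1 : ℝ) else y 0 - y j) * E i j) i j) from rfl]
    rw [Matrix.det_mul_column, Matrix.det_mul_row]
  -- Step 3 : subtract row 0 from the other rows
  have h3 : E.det = F.det := by
    refine Matrix.det_eq_of_forall_row_eq_smul_add_const
      (fun i => if i = 0 then 0 else 1) 0 (by simp) fun i j => ?_
    by_cases hi : i = 0 <;> by_cases hj : j = 0 <;>
      simp [hE, hF, hi, hj]
  -- Step 4 : factor rows and columns of F
  have h4 : F = Matrix.of fun i j =>
      (if i = 0 then (1 : ℝ) else x 0 - x i) *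
        ((if j = 0 then (1 : ℝ) else 1 / (x 0 + y j)) * G i j) := by
    ext i j
    by_cases hi : i = 0 <;> by_cases hj : j = 0
    · simp [hF, hG, hi, hj]
    · simp [hF, hG, hi, hj]
    · simp [hF, hG, hi, hj]
    · simp only [hF, hG, Matrix.of_apply, if_neg hi, if_neg hj]
      field_simp [h i j, h 0 j]
      ring
  have h4' : F.det = (∏ i, (if i = 0 then (1 : ℝ) else x 0 - x i)) *
      ((∏ j, (if j = 0 then (1 : ℝ) else 1 / (x 0 + y j))) * G.det) := by
    rw [h4]
    rw [show (Matrix.of fun i j =>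
        (if i = 0 then (1 : ℝ) else x 0 - x i) *
          ((if j = 0 then (1 : ℝ) else 1 / (x 0 + y j)) * G i j)) =
      Matrix.of (fun i j => (if i = 0 then (1 : ℝ) else x 0 - x i) *
        (Matrix.of fun i j => (if j = 0 then (1 : ℝ) else 1 / (x 0 + y j)) * G i j) i j)
      from rfl]
    rw [Matrix.det_mul_column, Matrix.det_mul_row]
  -- Step 5 : expand G along the first column
  have h5 : G.det = (Matrix.of fun i j : Fin n => 1 / (x i.succ + y j.succ)).det := by
    rw [Matrix.det_succ_column_zero, Fin.sum_univ_succ]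
    have hzero : ∀ i : Fin n, G i.succ 0 = 0 := by
      intro i; simp [hG, Fin.succ_ne_zero]
    simp only [hzero, mul_zero, zero_mul, Finset.sum_const_zero, add_zero]
    have hG00 : G 0 0 = 1 := by simp [hG]
    rw [hG00]
    have hsub : G.submatrix (Fin.succAbove 0) Fin.succ =
        Matrix.of fun i j : Fin n => 1 / (x i.succ + y j.succ) := by
      ext i j
      simp [hG, Matrix.submatrix_apply, Fin.succAbove_zero, Fin.succ_ne_zero]
    rw [hsub]
    simp
  -- Put everything together
  rw [h1, h2', h3, h4', h5]
  -- simplify the `if` products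
  have p1 : (∏ j, (if j = 0 then (1 : ℝ) else y 0 - y j)) =
      ∏ j : Fin n, (y 0 - y j.succ) := by
    rw [Fin.prod_univ_succ]; simp [Fin.succ_ne_zero]
  have p2 : (∏ i, (if i = 0 then (1 : ℝ) else x 0 - x i)) =
      ∏ i : Fin n, (x 0 - x i.succ) := by
    rw [Fin.prod_univ_succ]; simp [Fin.succ_ne_zero]
  have p3 : (∏ j, (if j = 0 then (1 : ℝ) else 1 / (x 0 + y j))) =
      ∏ j : Fin n, 1 / (x 0 + y j.succ) := by
    rw [Fin.prod_univ_succ]; simp [Fin.succ_ne_zero]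
  rw [p1, p2, p3]
  have q1 : (∏ j : Fin n, (y 0 - y j.succ)) * ∏ i : Fin n, (x 0 - x i.succ) =
      ∏ j : Fin n, ((x j.succ - x 0) * (y j.succ - y 0)) := by
    rw [← Finset.prod_mul_distrib]
    exact Finset.prod_congr rfl fun j _ => by ring
  have q2 : (∏ i, 1 / (x i + y 0)) = (∏ i, (x i + y 0))⁻¹ := by
    rw [← Finset.prod_inv_distrib]; simp
  have q3 : (∏ j : Fin n, 1 / (x 0 + y j.succ)) = (∏ j : Fin n, (x 0 + y j.succ))⁻¹ := by
    rw [← Finset.prod_inv_distrib]; simp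
  rw [q2, q3, ← q1, div_eq_mul_inv, mul_inv]
  ring

/-- The determinant of the `n × n` Cauchy matrix `C i j = 1 / (x i + y j)` equals
`(∏_{i<j} (x j - x i) * (y j - y i)) / (∏_{i,j} (x i + y j))`. -/
theorem cauchy_det (n : ℕ) (x y : Fin n → ℝ) (h : ∀ i j, x i + y j ≠ 0) :
    (Matrix.of fun i j : Fin n => 1 / (x i + y j)).det =
      (∏ i, ∏ j ∈ Finset.univ.filter (fun j => i < j), (x j - x i) * (y j - y i)) /
        ∏ i, ∏ j, (x i + y j) := by
  induction n with
  | zero => simp [Matrix.det_fin_zero]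
  | succ n ih =>
    rw [cauchy_step n x y h, ih (fun i => x i.succ) (fun j => y j.succ)
      (fun i j => h i.succ j.succ)]
    -- rewrite the numerator product over `Fin (n+1)`
    have hnum : (∏ i, ∏ j ∈ Finset.univ.filter (fun j => i < j), (x j - x i) * (y j - y i)) =
        (∏ j : Fin n, ((x j.succ - x 0) * (y j.succ - y 0))) *
          ∏ i : Fin n, ∏ j ∈ Finset.univ.filter (fun j => i < j),
            (x j.succ - x i.succ) * (y j.succ - y i.succ) := by
      rw [Fin.prod_univ_succ, cauchyAux_filter_zero]
      congr 1
      refine Finset.prod_congr rfl fun i _ => ?_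
      exact cauchyAux_filter_succ n i _
    have hden : (∏ i, ∏ j, (x i + y j)) =
        ((∏ j, (x 0 + y j)) * ∏ i : Fin n, (x i.succ + y 0)) *
          ∏ i : Fin n, ∏ j : Fin n, (x i.succ + y j.succ) := by
      rw [Fin.prod_univ_succ]
      have hin : ∀ i : Fin n, (∏ j, (x i.succ + y j)) =
          (x i.succ + y 0) * ∏ j : Fin n, (x i.succ + y j.succ) :=
        fun i => Fin.prod_univ_succ _
      rw [Finset.prod_congr rfl (fun i _ => hin i), Finset.prod_mul_distrib]
      ring
    rw [hnum, hden, div_mul_div_comm]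
    congr 1
    rw [Fin.prod_univ_succ (fun i => x i + y 0), Fin.prod_univ_succ (fun j => x 0 + y j)]
    ring
end

section
/- If all x_i are distinct and all y_j are distinct and x_i + y_j > 0 for all i,j, with x_1 < x_2 < ... < x_n and y_1 < y_2 < ... < y_n, then the Cauchy matrix C_{ij} = 1/(x_i + y_j) has positive determinant. -/
open Matrix

/-- If `x` and `y` are strictly increasing and `x i + y j > 0` for all `i, j`, then the
Cauchy matrix `C i j = 1 / (x i + y j)` has positive determinant. -/
theorem cauchy_det_pos (n : ℕ) (x y : Fin n → ℝ)
    (hx : StrictMono x) (hy : StrictMono y) (h : ∀ i j, 0 < x i + y j) :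
    0 < (Matrix.of fun i j : Fin n => 1 / (x i + y j)).det := by
  induction n with
  | zero => simp [Matrix.det_fin_zero]
  | succ n ih =>
    set x' : Fin n → ℝ := x ∘ Fin.castSucc with hx'
    set y' : Fin n → ℝ := y ∘ Fin.castSucc with hy'
    set xl := x (Fin.last n) with hxl
    set yl := y (Fin.last n) with hyl
    have hll : 0 < xl + yl := h _ _
    have hxli : ∀ i, 0 < x' i + yl := fun i => h _ _
    have hyli : ∀ j, 0 < xl + y' j := fun j => h _ _
    have hxy' : ∀ i j, 0 < x' i + y' j := fun i j => h _ _
    have hxlt : ∀ i, x' i < xl := fun i => hx (Fin.castSucc_lt_last i)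
    have hylt : ∀ j, y' j < yl := fun j => hy (Fin.castSucc_lt_last j)
    set A : Matrix (Fin n) (Fin n) ℝ := Matrix.of fun i j => 1 / (x' i + y' j) with hA
    set B : Matrix (Fin n) (Fin 1) ℝ := Matrix.of fun i _ => 1 / (x' i + yl) with hB
    set C : Matrix (Fin 1) (Fin n) ℝ := Matrix.of fun _ j => 1 / (xl + y' j) with hC
    set D : Matrix (Fin 1) (Fin 1) ℝ := Matrix.of fun _ _ => 1 / (xl + yl) with hD
    set E : Matrix (Fin 1) (Fin 1) ℝ := Matrix.of fun _ _ => (xl + yl) with hE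
    letI : Invertible D := by
      refine ⟨E, ?_, ?_⟩ <;>
      · ext i j
        fin_cases i; fin_cases j
        simp [hD, hE, Matrix.mul_apply, Fin.sum_univ_one, Matrix.one_apply]
        field_simp
    have hinv : ⅟ D = E := rfl
    have hM : (Matrix.of fun i j : Fin (n+1) => 1 / (x i + y j)) =
        (Matrix.fromBlocks A B C D).submatrix finSumFinEquiv.symm finSumFinEquiv.symm := by
      ext i j
      rcases i.eq_castSucc_or_eq_last with ⟨i, rfl⟩ | rfl <;>
        rcases j.eq_castSucc_or_eq_last with ⟨j, rfl⟩ | rfl <;>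
        simp [hA, hB, hC, hD, hx', hy', hxl, hyl, Fin.castSucc]
    set d : Fin n → ℝ := fun i => (xl - x' i) / (x' i + yl) with hd
    set e : Fin n → ℝ := fun j => (yl - y' j) / (xl + y' j) with he
    have hS : A - B * ⅟ D * C =
        Matrix.diagonal d * A * Matrix.diagonal e := by
      rw [hinv]
      ext i j
      simp [hA, hB, hC, hE, Matrix.mul_apply, Fin.sum_univ_one,
        Matrix.diagonal_apply, Finset.mul_sum, Finset.sum_mul, hd, he]
      have h1 := (hxli i).ne'
      have h2 := (hyli j).ne'
      have h3 := (hxy' i j).ne'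
      field_simp
      ring
    rw [hM, Matrix.det_submatrix_equiv_self, Matrix.det_fromBlocks₂₂, hS]
    have hdetA : 0 < A.det := ih x' y' (hx.comp Fin.strictMono_castSucc)
      (hy.comp Fin.strictMono_castSucc) hxy'
    have hdetD : 0 < D.det := by
      simp [hD, Matrix.det_fin_one]
      positivity
    have hdpos : 0 < ∏ i, d i :=
      Finset.prod_pos fun i _ => div_pos (sub_pos.2 (hxlt i)) (hxli i)
    have hepos : 0 < ∏ j, e j :=
      Finset.prod_pos fun j _ => div_pos (sub_pos.2 (hylt j)) (hyli j)
    rw [Matrix.det_mul, Matrix.det_mul, Matrix.det_diagonal, Matrix.det_diagonal]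
    exact mul_pos hdetD (mul_pos (mul_pos hdpos hdetA) hepos)
end

section
/- If x_1,...,x_n are distinct positive reals and 0 ≤ μ_1 < ... < μ_n are integers, then the generalized Vandermonde matrix G_{ij} = x_i^{μ_j} has positive determinant. -/
open Finset Equiv

/-- Rolle-based: from `S.card` positive roots of `g`, get `S.card - 1` positive roots of its
derivative `h`, all below `S.max'`. -/
lemma rolle_finset_aux (g h : ℝ → ℝ)
    (hg : ∀ t : ℝ, 0 < t → HasDerivAt g (h t) t) :
    ∀ (n : ℕ) (S : Finset ℝ) (_ : S.card = n) (hne : S.Nonempty)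
      (_ : ∀ x ∈ S, 0 < x ∧ g x = 0),
      ∃ T : Finset ℝ, (∀ z ∈ T, 0 < z ∧ h z = 0 ∧ z < S.max' hne) ∧ S.card ≤ T.card + 1 := by
  intro n
  induction n with
  | zero =>
    intro S hS hne _
    rw [Finset.card_eq_zero] at hS
    simp [hS] at hne
  | succ m ih =>
    intro S hcard hne hroots
    rcases Nat.eq_zero_or_pos m with hm | hm
    · exact ⟨∅, by simp, by simp [hcard, hm]⟩
    · set y := S.max' hne with hy
      have hyS : y ∈ S := S.max'_mem hne
      set S' := S.erase y with hS'
      have hcard' : S'.card = m := by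
        rw [hS', Finset.card_erase_of_mem hyS, hcard]; omega
      have hne' : S'.Nonempty := Finset.card_pos.mp (by omega)
      obtain ⟨T', hT', hcardT'⟩ := ih S' hcard' hne' (fun x hx => hroots x (S.erase_subset _ hx))
      set x := S'.max' hne' with hx
      have hxS : x ∈ S := S.erase_subset _ (S'.max'_mem hne')
      have hxy : x < y := by
        have hmem : x ∈ S.erase y := S'.max'_mem hne'
        exact lt_of_le_of_ne (S.le_max' _ hxS) (Finset.mem_erase.mp hmem).1
      have hxpos : 0 < x := (hroots x hxS).1
      -- Rolle between x and y
      obtain ⟨z, hzmem, hz0⟩ := exists_hasDerivAt_eq_zero hxy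
        (fun t ht => by
          have htpos : 0 < t := lt_of_lt_of_le hxpos ht.1
          exact (hg t htpos).continuousAt.continuousWithinAt)
        ((hroots x hxS).2.trans (hroots y hyS).2.symm)
        (fun t ht => hg t (lt_trans hxpos ht.1))
      have hzpos : 0 < z := lt_trans hxpos hzmem.1
      refine ⟨insert z T', ?_, ?_⟩
      · intro w hw
        rcases Finset.mem_insert.mp hw with rfl | hw
        · exact ⟨hzpos, hz0, hzmem.2⟩
        · obtain ⟨h1, h2, h3⟩ := hT' w hw
          exact ⟨h1, h2, lt_trans h3 hxy⟩
      · have hznot : z ∉ T' := fun hz => absurd (hT' z hz).2.2 (not_lt.mpr (le_of_lt hzmem.1))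
        rw [Finset.card_insert_of_notMem hznot]
        omega

/-- An exponential sum `t ↦ ∑ a in F, c a * t ^ e a` (real exponents, distinct on `F`,
some coefficient nonzero) has fewer than `F.card` positive roots. -/
lemma expsum_roots_lt : ∀ (k : ℕ) {ι : Type} [DecidableEq ι] (F : Finset ι) (e c : ι → ℝ)
    (S : Finset ℝ), F.card ≤ k → Set.InjOn e F → (∃ a ∈ F, c a ≠ 0) →
    (∀ x ∈ S, 0 < x ∧ ∑ a ∈ F, c a * x ^ (e a) = 0) → S.card < k := by
  intro k
  induction k with
  | zero =>
    intro ι _ F e c S hF hinj ⟨a, haF, _⟩ _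
    exact absurd (Finset.card_pos.mpr ⟨a, haF⟩) (by omega)
  | succ k ih =>
    intro ι _ F e c S hF hinj hc hS
    classical
    set F' := F.filter (fun a => c a ≠ 0) with hF'
    have hne' : F'.Nonempty := by
      obtain ⟨a, haF, hca⟩ := hc
      exact ⟨a, Finset.mem_filter.mpr ⟨haF, hca⟩⟩
    -- a0 : index in F' with minimal exponent
    obtain ⟨a0, ha0F', ha0min⟩ := F'.exists_min_image e hne'
    have ha0F : a0 ∈ F := (Finset.mem_filter.mp ha0F').1
    have hca0 : c a0 ≠ 0 := (Finset.mem_filter.mp ha0F').2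
    set g : ℝ → ℝ := fun t => ∑ a ∈ F, c a * t ^ (e a - e a0) with hgdef
    set h : ℝ → ℝ := fun t => ∑ a ∈ F, c a * ((e a - e a0) * t ^ (e a - e a0 - 1)) with hhdef
    have hg : ∀ t : ℝ, 0 < t → HasDerivAt g (h t) t := by
      intro t ht
      exact HasDerivAt.fun_sum fun a _ =>
        ((Real.hasDerivAt_rpow_const (p := e a - e a0) (Or.inl (ne_of_gt ht)))).const_mul (c a)
    have hgS : ∀ x ∈ S, 0 < x ∧ g x = 0 := by
      intro x hx
      obtain ⟨hxpos, hsum⟩ := hS x hx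
      refine ⟨hxpos, ?_⟩
      have : g x = (∑ a ∈ F, c a * x ^ (e a)) / x ^ (e a0) := by
        rw [Finset.sum_div]
        refine Finset.sum_congr rfl fun a _ => ?_
        rw [Real.rpow_sub hxpos, mul_div_assoc]
      rw [this, hsum, zero_div]
    by_cases hex : ∃ a ∈ F.erase a0, c a ≠ 0
    · rcases Finset.eq_empty_or_nonempty S with rfl | hSne
      · simp
      obtain ⟨T, hT, hST⟩ := rolle_finset_aux g h hg S.card S rfl hSne hgS
      obtain ⟨a1, ha1, hca1⟩ := hex
      have ha1F : a1 ∈ F := Finset.mem_of_mem_erase ha1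
      have ha1ne : a1 ≠ a0 := Finset.ne_of_mem_erase ha1
      have hTlt : T.card < k := by
        refine ih (F.erase a0) (fun a => e a - e a0 - 1) (fun a => c a * (e a - e a0)) T
          ?_ ?_ ?_ ?_
        · rw [Finset.card_erase_of_mem ha0F]; omega
        · intro a ha b hb hab
          simp only at hab
          exact hinj (F.erase_subset _ ha) (F.erase_subset _ hb) (by linarith)
        · refine ⟨a1, ha1, ?_⟩
          have hea : e a1 ≠ e a0 := fun hh => ha1ne (hinj ha1F ha0F hh)
          exact mul_ne_zero hca1 (sub_ne_zero.mpr hea)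
        · intro z hz
          obtain ⟨hzpos, hhz, _⟩ := hT z hz
          refine ⟨hzpos, ?_⟩
          have h0 : h z = c a0 * ((e a0 - e a0) * z ^ (e a0 - e a0 - 1)) +
              ∑ a ∈ F.erase a0, c a * ((e a - e a0) * z ^ (e a - e a0 - 1)) :=
            (Finset.add_sum_erase F _ ha0F).symm
          have : ∑ a ∈ F.erase a0, c a * ((e a - e a0) * z ^ (e a - e a0 - 1)) = 0 := by
            have := h0.symm.trans hhz
            simpa using this
          rw [← this]
          exact Finset.sum_congr rfl fun a _ => by ring
      omega
    · -- all other coefficients zero: g has no positive roots, so S = ∅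
      push_neg at hex
      have hSempty : S = ∅ := by
        rw [Finset.eq_empty_iff_forall_notMem]
        intro x hxS
        obtain ⟨hxpos, hsum⟩ := hS x hxS
        have : ∑ a ∈ F, c a * x ^ (e a) = c a0 * x ^ (e a0) := by
          refine Finset.sum_eq_single_of_mem a0 ha0F fun b hbF hbne => ?_
          rw [hex b (Finset.mem_erase.mpr ⟨hbne, hbF⟩), zero_mul]
        rw [this] at hsum
        exact mul_ne_zero hca0 (ne_of_gt (Real.rpow_pos_of_pos hxpos _)) hsum
      simp [hSempty]

lemma genVandermonde_det_ne_zero (n : ℕ) (x : Fin n → ℝ) (hxpos : ∀ i, 0 < x i)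
    (hxinj : Function.Injective x) (μ : Fin n → ℕ) (hμinj : Function.Injective μ) :
    (Matrix.of fun i j : Fin n => x i ^ (μ j)).det ≠ 0 := by
  intro hdet
  obtain ⟨v, hv, hmul⟩ := (Matrix.exists_mulVec_eq_zero_iff).mpr hdet
  have key := expsum_roots_lt n (Finset.univ : Finset (Fin n)) (fun j => (μ j : ℝ)) v
    (Finset.univ.image x) (by simp)
    (fun a _ b _ hab => hμinj (Nat.cast_injective hab))
    (by
      rcases Function.ne_iff.mp hv with ⟨j, hj⟩
      exact ⟨j, Finset.mem_univ j, hj⟩)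
    (by
      intro t ht
      obtain ⟨i, _, rfl⟩ := Finset.mem_image.mp ht
      refine ⟨hxpos i, ?_⟩
      have := congrFun hmul i
      simp only [Matrix.mulVec, dotProduct, Matrix.of_apply, Pi.zero_apply] at this
      rw [← this]
      refine Finset.sum_congr rfl fun j _ => ?_
      rw [Real.rpow_natCast, mul_comm])
  rw [Finset.card_image_of_injective _ hxinj, Finset.card_univ, Fintype.card_fin] at key
  omega

lemma perm_eq_one_of_strictMono {n : ℕ} (σ : Perm (Fin n)) (h : StrictMono σ) : σ = 1 := by
  haveI : WellFoundedLT (Fin n) := inferInstance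
  have hinv : StrictMono ⇑σ⁻¹ := by
    intro a b hab
    by_contra hc
    push_neg at hc
    have h2 := h.le_iff_le.mpr hc
    simp at h2
    exact absurd hab (not_lt.mpr h2)
  refine Equiv.ext fun i => ?_
  have h1 : i ≤ σ i := h.le_apply
  have h2 : σ i ≤ i := by simpa using hinv.le_apply (x := σ i)
  simpa using le_antisymm h2 h1

lemma exists_det_pos (n : ℕ) (μ : Fin n → ℕ) (hμ : StrictMono μ) :
    ∃ y : Fin n → ℝ, StrictMono y ∧ (∀ i, 0 < y i) ∧
      0 < (Matrix.of fun i j : Fin n => y i ^ (μ j)).det := by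
  set t : ℝ := (n.factorial : ℝ) + 1 with ht
  have hfac : (1:ℝ) ≤ (n.factorial : ℝ) := by exact_mod_cast n.factorial_pos
  have ht1 : (1:ℝ) < t := by linarith
  have ht0 : (0:ℝ) < t := by linarith
  set y : Fin n → ℝ := fun i => t ^ ((i : ℕ) + 1) with hy
  have hymono : StrictMono y := fun i j hij => by
    exact pow_lt_pow_right₀ ht1 (by omega)
  have hypos : ∀ i, 0 < y i := fun i => pow_pos ht0 _
  set E : Perm (Fin n) → ℕ := fun σ => ∑ i, ((σ i : ℕ) + 1) * μ i with hE
  -- strict rearrangement: E σ < E 1 for σ ≠ 1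
  have hElt : ∀ σ : Perm (Fin n), σ ≠ 1 → E σ < E 1 := by
    intro σ hσ
    set f : Fin n → ℝ := fun i => ((i : ℕ) : ℝ) + 1 with hf
    set g : Fin n → ℝ := fun i => ((μ i : ℕ) : ℝ) with hg
    have hfg : Monovary f g := by
      intro i j hij
      simp only [hg] at hij
      have : μ i < μ j := by exact_mod_cast hij
      have hij' : i < j := by
        by_contra hc
        exact absurd (hμ.le_iff_le.mpr (not_lt.mp hc)) (not_le.mpr this)
      simp only [hf]
      have : (i : ℕ) ≤ (j : ℕ) := le_of_lt hij'
      exact_mod_cast by linarith [this]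
    have hnot : ¬ Monovary (f ∘ σ) g := by
      intro hmono
      apply hσ
      apply perm_eq_one_of_strictMono
      have hmonotone : Monotone ⇑σ := by
        intro i j hij
        rcases eq_or_lt_of_le hij with rfl | hlt
        · exact le_rfl
        · have hμlt : g i < g j := by
            simp only [hg]
            exact_mod_cast hμ hlt
          have := hmono hμlt
          simp only [Function.comp, hf] at this
          have : ((σ i : ℕ) : ℝ) ≤ ((σ j : ℕ) : ℝ) := by linarith
          exact Fin.le_def.mpr (by exact_mod_cast this)
      exact hmonotone.strictMono_of_injective σ.injective
    have hlt := (hfg.sum_comp_perm_mul_lt_sum_mul_iff (σ := σ)).mpr hnot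
    have hcast : ((E σ : ℕ) : ℝ) = ∑ i, f (σ i) * g i := by
      simp only [hE, hf, hg]
      push_cast
      rfl
    have hcast1 : ((E 1 : ℕ) : ℝ) = ∑ i, f i * g i := by
      simp only [hE, hf, hg, Equiv.Perm.one_apply]
      push_cast
      rfl
    rw [← hcast, ← hcast1] at hlt
    exact_mod_cast hlt
  -- determinant formula
  set M : Matrix (Fin n) (Fin n) ℝ := Matrix.of fun i j : Fin n => y i ^ (μ j) with hM
  have hdet : M.det = ∑ σ : Perm (Fin n), ((Perm.sign σ : ℤ) : ℝ) * t ^ E σ := by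
    rw [Matrix.det_apply]
    refine Finset.sum_congr rfl fun σ _ => ?_
    have hprod : ∏ i, M (σ i) i = t ^ E σ := by
      rw [hE, ← Finset.prod_pow_eq_pow_sum]
      exact Finset.prod_congr rfl fun i _ => by rw [hM, hy]; simp [← pow_mul]
    rw [hprod, Units.smul_def, zsmul_eq_mul]
  refine ⟨y, hymono, hypos, ?_⟩
  rw [hdet, ← Finset.add_sum_erase _ _ (Finset.mem_univ (1 : Perm (Fin n)))]
  simp only [Perm.sign_one, Units.val_one, Int.cast_one, one_mul]
  rcases Finset.eq_empty_or_nonempty ((Finset.univ : Finset (Perm (Fin n))).erase 1) with he | hne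
  · rw [he, Finset.sum_empty, add_zero]
    exact pow_pos ht0 _
  · obtain ⟨σ0, hσ0⟩ := hne
    have hσ0ne : σ0 ≠ 1 := Finset.ne_of_mem_erase hσ0
    have hE1 : 1 ≤ E 1 := by
      have := hElt σ0 hσ0ne
      omega
    have hbound : ∀ σ ∈ (Finset.univ : Finset (Perm (Fin n))).erase 1,
        -(t ^ (E 1 - 1)) ≤ ((Perm.sign σ : ℤ) : ℝ) * t ^ E σ := by
      intro σ hσ
      have hEσ : E σ ≤ E 1 - 1 := by
        have := hElt σ (Finset.ne_of_mem_erase hσ)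
        omega
      have htle : t ^ E σ ≤ t ^ (E 1 - 1) := pow_le_pow_right₀ (le_of_lt ht1) hEσ
      have htpos : (0:ℝ) < t ^ E σ := pow_pos ht0 _
      rcases Int.units_eq_one_or (Perm.sign σ) with hs | hs <;> rw [hs] <;> push_cast <;> nlinarith
    have hsum : -((((Finset.univ : Finset (Perm (Fin n))).erase 1).card : ℝ) * t ^ (E 1 - 1)) ≤
        ∑ σ ∈ (Finset.univ : Finset (Perm (Fin n))).erase 1, ((Perm.sign σ : ℤ) : ℝ) * t ^ E σ := by
      calc -((((Finset.univ : Finset (Perm (Fin n))).erase 1).card : ℝ) * t ^ (E 1 - 1))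
          = ∑ _σ ∈ (Finset.univ : Finset (Perm (Fin n))).erase 1, -(t ^ (E 1 - 1)) := by
            rw [Finset.sum_const, nsmul_eq_mul]; ring
        _ ≤ _ := Finset.sum_le_sum hbound
    have hcard : (((Finset.univ : Finset (Perm (Fin n))).erase 1).card : ℝ) ≤ (n.factorial : ℝ) - 1 := by
      rw [Finset.card_erase_of_mem (Finset.mem_univ _), Finset.card_univ, Fintype.card_perm,
        Fintype.card_fin]
      have : 1 ≤ n.factorial := n.factorial_pos
      push_cast [Nat.cast_sub this]
      linarith
    have htE1 : t ^ E 1 = t * t ^ (E 1 - 1) := by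
      rw [← pow_succ']
      congr 1
      omega
    have htpow : (0:ℝ) < t ^ (E 1 - 1) := pow_pos ht0 _
    nlinarith [hsum, hcard, htpow]

/-- If `x 1 < … < x n` are positive reals and `μ 1 < … < μ n` are nonnegative integers,
then the generalized Vandermonde matrix `G i j = x i ^ (μ j)` has positive determinant. -/
theorem genVandermonde_det_pos (n : ℕ) (x : Fin n → ℝ) (hxpos : ∀ i, 0 < x i)
    (hx : StrictMono x) (μ : Fin n → ℕ) (hμ : StrictMono μ) :
    0 < (Matrix.of fun i j : Fin n => x i ^ (μ j)).det := by
  by_contra hcon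
  push_neg at hcon
  have hne := genVandermonde_det_ne_zero n x hxpos hx.injective μ hμ.injective
  have hlt : (Matrix.of fun i j : Fin n => x i ^ (μ j)).det < 0 := lt_of_le_of_ne hcon hne
  obtain ⟨y, hymono, hypos, hypos_det⟩ := exists_det_pos n μ hμ
  -- the path
  set w : ℝ → Fin n → ℝ := fun s i => (1 - s) * x i + s * y i with hw
  set F : ℝ → ℝ := fun s => (Matrix.of fun i j : Fin n => w s i ^ (μ j)).det with hF
  have hcont : Continuous F := by
    apply Continuous.matrix_det
    apply continuous_matrix
    intro i j
    simp only [Matrix.of_apply, hw]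
    fun_prop
  have hmem : ∀ s ∈ Set.Icc (0:ℝ) 1, (∀ i, 0 < w s i) ∧ StrictMono (w s) := by
    intro s hs
    obtain ⟨hs0, hs1⟩ := hs
    have h1s : (0:ℝ) ≤ 1 - s := by linarith
    constructor
    · intro i
      have hmin : 0 < min (x i) (y i) := lt_min (hxpos i) (hypos i)
      have p1 := mul_nonneg h1s (sub_nonneg.mpr (min_le_left (x i) (y i)))
      have p2 := mul_nonneg hs0 (sub_nonneg.mpr (min_le_right (x i) (y i)))
      simp only [hw]
      nlinarith
    · intro i j hij
      have hxij := hx hij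
      have hyij := hymono hij
      have hmin : 0 < min (x j - x i) (y j - y i) := lt_min (by linarith) (by linarith)
      have p1 := mul_nonneg h1s (sub_nonneg.mpr (min_le_left (x j - x i) (y j - y i)))
      have p2 := mul_nonneg hs0 (sub_nonneg.mpr (min_le_right (x j - x i) (y j - y i)))
      simp only [hw]
      nlinarith
  have hF0 : F 0 < 0 := by
    have : w 0 = x := by funext i; simp [hw]
    simpa [hF, this] using hlt
  have hF1 : 0 < F 1 := by
    have : w 1 = y := by funext i; simp [hw]
    simpa [hF, this] using hypos_det
  have hIVT := intermediate_value_Icc (by norm_num : (0:ℝ) ≤ 1) hcont.continuousOn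
  have h0mem : (0:ℝ) ∈ Set.Icc (F 0) (F 1) := ⟨le_of_lt hF0, le_of_lt hF1⟩
  obtain ⟨s, hsmem, hFs⟩ := hIVT h0mem
  obtain ⟨hwpos, hwmono⟩ := hmem s hsmem
  exact genVandermonde_det_ne_zero n (w s) hwpos hwmono.injective μ hμ.injective hFs
end

section
/- If A = LU is an LU factorization of an invertible n×n matrix A where all leading principal minors of A are nonzero, with L unit lower triangular and U upper triangular, then each entry U_{kj} (for k ≤ j) equals det(A[{1..k}, {1..k-1}∪{j}]) / det(A[{1..k-1},{1..k-1}]), i.e., each nontrivial entry of U is a quotient of minors of A. -/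
private lemma sum_castLE_aux {F : Type*} [AddCommMonoid F] {n k : ℕ} (hk : k ≤ n)
    (f : Fin n → F) (hf : ∀ p : Fin n, k ≤ (p : ℕ) → f p = 0) :
    ∑ p : Fin n, f p = ∑ q : Fin k, f (Fin.castLE hk q) := by
  classical
  let g : ℕ → F := fun i => if h : i < n then f ⟨i, h⟩ else 0
  have h1 : ∑ p : Fin n, f p = ∑ i ∈ Finset.range n, g i := by
    rw [Finset.sum_range fun i => g i]
    apply Finset.sum_congr rfl
    intro p _
    simp only [g, dif_pos p.isLt]
  have h2 : ∑ i ∈ Finset.range n, g i = ∑ i ∈ Finset.range k, g i := by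
    refine (Finset.sum_subset (Finset.range_subset_range.2 hk) ?_).symm
    intro i hi hik
    simp only [Finset.mem_range] at hi hik
    simp only [g, dif_pos hi]
    exact hf ⟨i, hi⟩ (le_of_not_gt hik)
  rw [h1, h2, Finset.sum_range fun i => g i]
  apply Finset.sum_congr rfl
  intro q _
  simp only [g, dif_pos (lt_of_lt_of_le q.isLt hk)]
  rfl

private lemma submatrix_factor {F : Type*} [Field F] {n m : ℕ} (hm : m ≤ n)
    (A L U : Matrix (Fin n) (Fin n) F)
    (hLlower : ∀ i j : Fin n, i < j → L i j = 0)
    (hA : A = L * U) (c : Fin m → Fin n) :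
    A.submatrix (Fin.castLE hm) c =
      L.submatrix (Fin.castLE hm) (Fin.castLE hm) * U.submatrix (Fin.castLE hm) c := by
  ext p i
  simp only [Matrix.submatrix_apply, hA, Matrix.mul_apply]
  exact sum_castLE_aux hm _ fun q hq =>
    mul_eq_zero_of_left (hLlower _ _ (show ((Fin.castLE hm p : Fin n) : ℕ) < (q : ℕ) from
      lt_of_lt_of_le p.isLt hq)) _

private lemma det_submatrix_eq {F : Type*} [Field F] {n m : ℕ} (hm : m ≤ n)
    (A L U : Matrix (Fin n) (Fin n) F)
    (hLdiag : ∀ i, L i i = 1)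
    (hLlower : ∀ i j : Fin n, i < j → L i j = 0)
    (hA : A = L * U) (c : Fin m → Fin n) :
    (A.submatrix (Fin.castLE hm) c).det = (U.submatrix (Fin.castLE hm) c).det := by
  rw [submatrix_factor hm A L U hLlower hA c, Matrix.det_mul]
  have hLt : (L.submatrix (Fin.castLE hm) (Fin.castLE hm)).BlockTriangular OrderDual.toDual := by
    intro i j hij
    exact hLlower _ _ (show ((Fin.castLE hm i : Fin n) : ℕ) < (Fin.castLE hm j : Fin n) from hij)
  rw [Matrix.det_of_lowerTriangular _ hLt]
  have : ∀ i : Fin m, (L.submatrix (Fin.castLE hm) (Fin.castLE hm)) i i = 1 := fun i => hLdiag _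
  rw [Finset.prod_congr rfl fun i _ => this i, Finset.prod_const_one, one_mul]

/-- If `A = L * U` with `L` unit lower triangular and `U` upper triangular, and all leading
principal minors of the invertible matrix `A` are nonzero, then for `k ≤ j` the entry
`U k j` equals the quotient of minors
`det A[{0..k}, {0..k-1} ∪ {j}] / det A[{0..k-1}, {0..k-1}]` (0-based indexing). -/
theorem lu_entries_quotient_of_minors {F : Type*} [Field F] (n : ℕ)
    (A L U : Matrix (Fin n) (Fin n) F)
    (hinv : IsUnit A.det)
    (hminors : ∀ (k : ℕ) (hk : k ≤ n),
      (A.submatrix (Fin.castLE hk) (Fin.castLE hk)).det ≠ 0)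
    (hLdiag : ∀ i, L i i = 1)
    (hLlower : ∀ i j : Fin n, i < j → L i j = 0)
    (hUupper : ∀ i j : Fin n, j < i → U i j = 0)
    (hA : A = L * U) :
    ∀ k j : Fin n, k ≤ j →
      U k j =
        (A.submatrix
            (Fin.castLE (Nat.succ_le_of_lt k.isLt) : Fin ((k : ℕ) + 1) → Fin n)
            (fun i : Fin ((k : ℕ) + 1) =>
              if h : (i : ℕ) < (k : ℕ) then (⟨(i : ℕ), h.trans k.isLt⟩ : Fin n) else j)).det /
          (A.submatrix
              (Fin.castLE (le_of_lt k.isLt) : Fin (k : ℕ) → Fin n)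
              (Fin.castLE (le_of_lt k.isLt) : Fin (k : ℕ) → Fin n)).det := by
  intro k j hkj
  have hk1 : (k : ℕ) + 1 ≤ n := Nat.succ_le_of_lt k.isLt
  have hk : (k : ℕ) ≤ n := le_of_lt k.isLt
  set c : Fin ((k : ℕ) + 1) → Fin n := fun i =>
    if h : (i : ℕ) < (k : ℕ) then (⟨(i : ℕ), h.trans k.isLt⟩ : Fin n) else j with hc
  -- denominator
  have hden : (A.submatrix (Fin.castLE hk) (Fin.castLE hk)).det =
      ∏ m : Fin (k : ℕ), U (Fin.castLE hk m) (Fin.castLE hk m) := by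
    have hUt : (U.submatrix (Fin.castLE hk) (Fin.castLE hk)).BlockTriangular id := by
      intro p q hpq
      exact hUupper _ _ (show ((Fin.castLE hk q : Fin n) : ℕ) < (Fin.castLE hk p : Fin n) from hpq)
    rw [det_submatrix_eq hk A L U hLdiag hLlower hA, Matrix.det_of_upperTriangular hUt]
    rfl
  have hdenne : (A.submatrix (Fin.castLE hk) (Fin.castLE hk)).det ≠ 0 := hminors _ hk
  -- numerator
  have hnum : (A.submatrix (Fin.castLE hk1) c).det =
      (∏ m : Fin (k : ℕ), U (Fin.castLE hk m) (Fin.castLE hk m)) * U k j := by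
    rw [det_submatrix_eq hk1 A L U hLdiag hLlower hA]
    have hup : (U.submatrix (Fin.castLE hk1) c).BlockTriangular id := by
      intro p q hpq
      simp only [id] at hpq
      have hq : (q : ℕ) < (k : ℕ) := lt_of_lt_of_le hpq (Nat.lt_succ_iff.mp p.isLt)
      simp only [Matrix.submatrix_apply, hc, dif_pos hq]
      exact hUupper _ _ (show ((⟨(q:ℕ), _⟩ : Fin n) : ℕ) < (Fin.castLE hk1 p : Fin n) from hpq)
    rw [Matrix.det_of_upperTriangular hup, Fin.prod_univ_castSucc]
    congr 1
    · apply Finset.prod_congr rfl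
      intro m _
      have hm : ((Fin.castSucc m : Fin ((k:ℕ)+1)) : ℕ) < (k : ℕ) := m.isLt
      simp only [Matrix.submatrix_apply, hc, dif_pos hm]
      rfl
    · have hlast : ¬ ((Fin.last (k : ℕ) : Fin ((k:ℕ)+1)) : ℕ) < (k : ℕ) := by simp
      simp only [Matrix.submatrix_apply, hc, dif_neg hlast]
      have hck : Fin.castLE hk1 (Fin.last (k : ℕ)) = k := Fin.ext (by simp)
      rw [hck]
  rw [hnum, hden]
  rw [hden] at hdenne
  field_simp
end

section
/- For the function f(x₁,...,xₙ) = ∏_m f_m(x) where each f_m is of the form x_i, x_i − x_j, or x_i + x_j, the relative perturbation of f under relative perturbations of the inputs is controlled by the relative gaps: if x̂_i = x_i(1+δ_i) with |δ_i| ≤ δ, then |f(x̂) − f(x)| / |f(x)| ≤ (1 + Cδ)^M − 1 where M is the number of factors and C = max_m (|x_i|+|x_j|)/|x_i ∓ x_j| over the difference/sum factors (C = 1 for factors x_i), provided all factors of f are nonzero at x and C·δ < 1. -/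
lemma prod_perturb {ι : Type*} [DecidableEq ι] (s : Finset ι) (a b : ι → ℝ) (ε : ℝ) (hε : 0 ≤ ε)
    (h : ∀ m ∈ s, |a m - b m| ≤ ε * |b m|) :
    |∏ m ∈ s, a m - ∏ m ∈ s, b m| ≤ ((1 + ε) ^ s.card - 1) * ∏ m ∈ s, |b m| := by
  induction s using Finset.induction with
  | empty => simp
  | @insert i s hi ih =>

    rw [Finset.prod_insert hi, Finset.prod_insert hi, Finset.prod_insert hi,
      Finset.card_insert_of_notMem hi]
    have hai : |a i| ≤ (1 + ε) * |b i| := by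
      have := h i (Finset.mem_insert_self i s)
      calc |a i| = |b i + (a i - b i)| := by ring_nf
        _ ≤ |b i| + |a i - b i| := abs_add_le _ _
        _ ≤ |b i| + ε * |b i| := by linarith
        _ = (1 + ε) * |b i| := by ring
    have ihs := ih (fun m hm => h m (Finset.mem_insert_of_mem hm))
    have hpb : (0:ℝ) ≤ ∏ m ∈ s, |b m| := Finset.prod_nonneg fun m _ => abs_nonneg _
    have hpow : (1:ℝ) ≤ (1 + ε) ^ s.card := one_le_pow₀ (by linarith)
    calc |a i * ∏ m ∈ s, a m - b i * ∏ m ∈ s, b m|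
        = |(a i - b i) * ∏ m ∈ s, b m + a i * (∏ m ∈ s, a m - ∏ m ∈ s, b m)| := by ring_nf
      _ ≤ |(a i - b i) * ∏ m ∈ s, b m| + |a i * (∏ m ∈ s, a m - ∏ m ∈ s, b m)| := abs_add_le _ _
      _ = |a i - b i| * |∏ m ∈ s, b m| + |a i| * |∏ m ∈ s, a m - ∏ m ∈ s, b m| := by
          rw [abs_mul, abs_mul]
      _ ≤ (ε * |b i|) * ∏ m ∈ s, |b m| + ((1 + ε) * |b i|) * (((1 + ε) ^ s.card - 1) * ∏ m ∈ s, |b m|) := by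
          rw [Finset.abs_prod]
          refine add_le_add (mul_le_mul_of_nonneg_right (h i (Finset.mem_insert_self i s)) hpb) ?_
          exact mul_le_mul hai ihs (abs_nonneg _) (by positivity)
      _ = ((1 + ε) ^ (s.card + 1) - 1) * (|b i| * ∏ m ∈ s, |b m|) := by ring

/-- Relative perturbation theory for products of admissible factors: if
`f = ∏_{m} f_m` where each factor `f_m` is of the form `x i`, `x i - x j`, or `x i + x j`,
all factors are nonzero at `x`, and `C ≥ 1` bounds the reciprocal relative gaps
(`|x i| + |x j| ≤ C * |x i ∓ x j|` for each difference/sum factor), then for relative input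
perturbations `x̂ i = x i * (1 + d i)` with `|d i| ≤ δ` and `C * δ < 1`, the relative change
of `f` satisfies `|f x̂ - f x| / |f x| ≤ (1 + C δ) ^ M - 1`. -/
theorem relative_perturbation_of_factored (n M : ℕ)
    (fm : Fin M → (Fin n → ℝ) → ℝ)
    (hform : ∀ m, (∃ i, fm m = fun x => x i) ∨
      (∃ i j, fm m = fun x => x i - x j) ∨ (∃ i j, fm m = fun x => x i + x j))
    (x : Fin n → ℝ) (hnz : ∀ m, fm m x ≠ 0)
    (C δ : ℝ) (hC1 : 1 ≤ C)
    (hCdiff : ∀ (m : Fin M) (i j : Fin n),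
      fm m = (fun x => x i - x j) → |x i| + |x j| ≤ C * |x i - x j|)
    (hCsum : ∀ (m : Fin M) (i j : Fin n),
      fm m = (fun x => x i + x j) → |x i| + |x j| ≤ C * |x i + x j|)
    (hδ0 : 0 ≤ δ) (hCδ : C * δ < 1)
    (d : Fin n → ℝ) (hd : ∀ i, |d i| ≤ δ) :
    |(∏ m, fm m (fun i => x i * (1 + d i))) - ∏ m, fm m x| / |∏ m, fm m x| ≤
      (1 + C * δ) ^ M - 1 := by
  set x' : Fin n → ℝ := fun i => x i * (1 + d i) with hx'
  have hCδ0 : 0 ≤ C * δ := mul_nonneg (by linarith) hδ0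
  have hfac : ∀ m : Fin M, |fm m x' - fm m x| ≤ (C * δ) * |fm m x| := by
    intro m
    rcases hform m with ⟨i, hm⟩ | ⟨i, j, hm⟩ | ⟨i, j, hm⟩
    · rw [hm]
      simp only [hx']
      have : x i * (1 + d i) - x i = x i * d i := by ring
      rw [this, abs_mul]
      calc |x i| * |d i| ≤ |x i| * δ := by
            exact mul_le_mul_of_nonneg_left (hd i) (abs_nonneg _)
        _ = 1 * δ * |x i| := by ring
        _ ≤ C * δ * |x i| := by
            gcongr
    · rw [hm]
      simp only [hx']
      have : x i * (1 + d i) - x j * (1 + d j) - (x i - x j) = x i * d i - x j * d j := by ring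
      rw [this]
      calc |x i * d i - x j * d j| ≤ |x i * d i| + |x j * d j| := abs_sub _ _
        _ = |x i| * |d i| + |x j| * |d j| := by rw [abs_mul, abs_mul]
        _ ≤ |x i| * δ + |x j| * δ := by gcongr <;> [exact hd i; exact hd j]
        _ = (|x i| + |x j|) * δ := by ring
        _ ≤ (C * |x i - x j|) * δ := by gcongr; exact hCdiff m i j hm
        _ = C * δ * |x i - x j| := by ring
    · rw [hm]
      simp only [hx']
      have : x i * (1 + d i) + x j * (1 + d j) - (x i + x j) = x i * d i + x j * d j := by ring
      rw [this]
      calc |x i * d i + x j * d j| ≤ |x i * d i| + |x j * d j| := abs_add_le _ _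
        _ = |x i| * |d i| + |x j| * |d j| := by rw [abs_mul, abs_mul]
        _ ≤ |x i| * δ + |x j| * δ := by gcongr <;> [exact hd i; exact hd j]
        _ = (|x i| + |x j|) * δ := by ring
        _ ≤ (C * |x i + x j|) * δ := by gcongr; exact hCsum m i j hm
        _ = C * δ * |x i + x j| := by ring
  have key := prod_perturb Finset.univ (fun m => fm m x') (fun m => fm m x) (C * δ) hCδ0
    (fun m _ => hfac m)
  simp only [Finset.card_univ, Fintype.card_fin] at key
  have hprodnz : (∏ m, fm m x) ≠ 0 := Finset.prod_ne_zero_iff.mpr fun m _ => hnz m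
  have habs : (0:ℝ) < |∏ m, fm m x| := abs_pos.mpr hprodnz
  rw [div_le_iff₀ habs]
  calc |(∏ m, fm m x') - ∏ m, fm m x| ≤ ((1 + C * δ) ^ M - 1) * ∏ m, |fm m x| := key
    _ = ((1 + C * δ) ^ M - 1) * |∏ m, fm m x| := by rw [Finset.abs_prod]
end

section
/- If A is an n×n matrix whose bipartite sparsity graph is acyclic (in particular, if A is bidiagonal), then det(A) is either zero or equal, up to sign, to a single product of n entries of A; i.e., at most one permutation σ contributes a nonzero term ∏_i A_{i,σ(i)} to the Leibniz expansion. -/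
/-- The undirected bipartite sparsity graph of an `n × n` matrix `A`: vertices are the rows
(`Sum.inl`) and the columns (`Sum.inr`), with an edge between row `i` and column `j`
iff `A i j ≠ 0`. -/
def bipartiteGraph {n : ℕ} (A : Matrix (Fin n) (Fin n) ℝ) :
    SimpleGraph (Fin n ⊕ Fin n) where
  Adj u v :=
    (∃ i j, u = Sum.inl i ∧ v = Sum.inr j ∧ A i j ≠ 0) ∨
    (∃ i j, u = Sum.inr j ∧ v = Sum.inl i ∧ A i j ≠ 0)
  symm := by
    constructor
    rintro u v (⟨i, j, rfl, rfl, h⟩ | ⟨i, j, rfl, rfl, h⟩)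
    · exact Or.inr ⟨i, j, rfl, rfl, h⟩
    · exact Or.inl ⟨i, j, rfl, rfl, h⟩
  loopless := by
    constructor
    rintro u (⟨i, j, h₁, h₂, h⟩ | ⟨i, j, h₁, h₂, h⟩) <;> simp_all

/-- If the bipartite sparsity graph of `A` is acyclic, then at most one permutation `σ`
contributes a nonzero term `∏ i, A i (σ i)` to the Leibniz expansion of `det A`; hence
`det A` is either zero or equal, up to sign, to a single product of `n` entries of `A`. -/
theorem det_of_acyclic_sparsity (n : ℕ) (A : Matrix (Fin n) (Fin n) ℝ)
    (hacyclic : (bipartiteGraph A).IsAcyclic) :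
    (∀ σ τ : Equiv.Perm (Fin n),
        (∏ i, A i (σ i)) ≠ 0 → (∏ i, A i (τ i)) ≠ 0 → σ = τ) ∧
    (A.det = 0 ∨ ∃ σ : Equiv.Perm (Fin n),
        A.det = (Equiv.Perm.sign σ : ℝ) * ∏ i, A i (σ i)) := by
  have huniq : ∀ σ τ : Equiv.Perm (Fin n),
      (∏ i, A i (σ i)) ≠ 0 → (∏ i, A i (τ i)) ≠ 0 → σ = τ := by
    intro σ τ hσ hτ
    by_contra hne
    have hσe : ∀ i, A i (σ i) ≠ 0 := fun i =>
      Finset.prod_ne_zero_iff.mp hσ i (Finset.mem_univ i)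
    have hτe : ∀ i, A i (τ i) ≠ 0 := fun i =>
      Finset.prod_ne_zero_iff.mp hτ i (Finset.mem_univ i)
    set ρ : Equiv.Perm (Fin n) := τ⁻¹ * σ with hρdef
    have hτρ : ∀ x, τ (ρ x) = σ x := by
      intro x; simp [hρdef]
    obtain ⟨i0, hi0⟩ : ∃ i, σ i ≠ τ i := by
      by_contra h
      push_neg at h
      exact hne (Equiv.ext h)
    have hρi0 : ρ i0 ≠ i0 := by
      intro h
      apply hi0
      rw [← hτρ i0, h]
    set G := bipartiteGraph A with hG
    -- basic adjacency facts
    have adjσ : ∀ m, G.Adj (Sum.inl m) (Sum.inr (σ m)) :=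
      fun m => Or.inl ⟨m, σ m, rfl, rfl, hσe m⟩
    have adjτ : ∀ m, G.Adj (Sum.inl m) (Sum.inr (τ m)) :=
      fun m => Or.inl ⟨m, τ m, rfl, rfl, hτe m⟩
    set e : Sym2 (Fin n ⊕ Fin n) := s(Sum.inl i0, Sum.inr (σ i0)) with he
    -- edge equality characterization
    have heq : ∀ (m j : Fin n), s((Sum.inl m : Fin n ⊕ Fin n), Sum.inr j) = e ↔
        m = i0 ∧ j = σ i0 := by
      intro m j
      rw [he, Sym2.eq_iff]
      constructor
      · rintro (⟨h1, h2⟩ | ⟨h1, h2⟩)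
        · exact ⟨Sum.inl.inj h1, Sum.inr.inj h2⟩
        · exact absurd h1 (by simp)
      · rintro ⟨rfl, rfl⟩; exact Or.inl ⟨rfl, rfl⟩
    -- periodicity
    have hper : (⇑ρ).IsPeriodicPt (orderOf ρ) i0 := by
      have : ρ ^ orderOf ρ = 1 := pow_orderOf_eq_one ρ
      simp [Function.IsPeriodicPt, Function.IsFixedPt, ← Equiv.Perm.iterate_eq_pow, this]
      rw [Equiv.Perm.iterate_eq_pow, this]; rfl
    have hmem : i0 ∈ Function.periodicPts ⇑ρ :=
      ⟨orderOf ρ, orderOf_pos ρ, hper⟩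
    set k := Function.minimalPeriod ⇑ρ i0 with hk
    have hk0 : 0 < k := Function.minimalPeriod_pos_of_mem_periodicPts hmem
    have hkper : (⇑ρ)^[k] i0 = i0 := Function.iterate_minimalPeriod (f := ⇑ρ) (x := i0)
    have hlt : ∀ m, 0 < m → m < k → (⇑ρ)^[m] i0 ≠ i0 := by
      intro m hm1 hmk h
      exact absurd (Function.IsPeriodicPt.minimalPeriod_le hm1 h) (by omega)
    have hk2 : 2 ≤ k := by
      by_contra h
      have hk1 : k = 1 := by omega
      rw [hk1, Function.iterate_one] at hkper
      exact hρi0 hkper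
    -- walk construction
    have key : ∀ m, 1 ≤ m → m < k →
        ∃ p : G.Walk (Sum.inl ((⇑ρ)^[m] i0)) (Sum.inr (σ i0)), e ∉ p.edges := by
      intro m
      induction m with
      | zero => omega
      | succ m ih =>
        intro _ hmk
        rcases Nat.eq_or_lt_of_le (Nat.one_le_iff_ne_zero.mpr (Nat.succ_ne_zero m)) with h1 | h1
        · -- m + 1 = 1
          have hm0 : m = 0 := by omega
          subst hm0
          have hadj : G.Adj (Sum.inl ((⇑ρ)^[1] i0)) (Sum.inr (σ i0)) := by
            have := adjτ ((⇑ρ)^[1] i0)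
            rwa [show τ ((⇑ρ)^[1] i0) = σ i0 by simp [hτρ]] at this
          refine ⟨SimpleGraph.Walk.cons hadj SimpleGraph.Walk.nil, ?_⟩
          simp only [SimpleGraph.Walk.edges_cons, SimpleGraph.Walk.edges_nil,
            List.mem_singleton, List.mem_cons, List.not_mem_nil, or_false]
          rw [eq_comm, heq]
          rintro ⟨h, -⟩
          exact hlt 1 (by omega) hmk (by simpa using h)
        · -- m ≥ 1
          have hm1 : 1 ≤ m := by omega
          obtain ⟨p, hp⟩ := ih hm1 (by omega)
          have hstep1 : G.Adj (Sum.inl ((⇑ρ)^[m+1] i0)) (Sum.inr (σ ((⇑ρ)^[m] i0))) := by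
            have := adjτ ((⇑ρ)^[m+1] i0)
            rwa [show τ ((⇑ρ)^[m+1] i0) = σ ((⇑ρ)^[m] i0) by
              rw [Function.iterate_succ_apply', hτρ]] at this
          have hstep2 : G.Adj (Sum.inr (σ ((⇑ρ)^[m] i0))) (Sum.inl ((⇑ρ)^[m] i0)) :=
            (adjσ ((⇑ρ)^[m] i0)).symm
          refine ⟨SimpleGraph.Walk.cons hstep1 (SimpleGraph.Walk.cons hstep2 p), ?_⟩
          simp only [SimpleGraph.Walk.edges_cons, List.mem_cons]
          rintro (h | h | h)
          · rw [eq_comm, heq] at h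
            exact hlt (m+1) (by omega) hmk (by simpa using h.1)
          · rw [Sym2.eq_swap, eq_comm, heq] at h
            exact hlt m (by omega) (by omega) (by simpa using h.1)
          · exact hp h
    obtain ⟨p, hp⟩ := key (k-1) (by omega) (by omega)
    -- full walk from inl i0 to inr (σ i0)
    have hfix : ρ ((⇑ρ)^[k-1] i0) = i0 := by
      have h2 := hkper
      rw [show k = (k-1)+1 by omega, Function.iterate_succ_apply'] at h2
      exact h2
    have hstep1 : G.Adj (Sum.inl i0) (Sum.inr (σ ((⇑ρ)^[k-1] i0))) := by
      have := adjτ i0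
      rwa [show τ i0 = σ ((⇑ρ)^[k-1] i0) by rw [← hτρ ((⇑ρ)^[k-1] i0), hfix]] at this
    have hstep2 : G.Adj (Sum.inr (σ ((⇑ρ)^[k-1] i0))) (Sum.inl ((⇑ρ)^[k-1] i0)) :=
      (adjσ ((⇑ρ)^[k-1] i0)).symm
    set w : G.Walk (Sum.inl i0) (Sum.inr (σ i0)) :=
      SimpleGraph.Walk.cons hstep1 (SimpleGraph.Walk.cons hstep2 p) with hw
    have hwe : e ∉ w.edges := by
      rw [hw]
      simp only [SimpleGraph.Walk.edges_cons, List.mem_cons]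
      rintro (h | h | h)
      · rw [eq_comm, heq] at h
        exact hlt (k-1) (by omega) (by omega) (σ.injective h.2)
      · rw [Sym2.eq_swap, eq_comm, heq] at h
        exact hlt (k-1) (by omega) (by omega) (by simpa using h.1)
      · exact hp h
    have hbridge := (SimpleGraph.isAcyclic_iff_forall_adj_isBridge.mp hacyclic) (adjσ i0)
    rw [SimpleGraph.isBridge_iff_adj_and_forall_walk_mem_edges] at hbridge
    exact hwe (hbridge w)
  have hdet : A.det = ∑ σ : Equiv.Perm (Fin n),
      (Equiv.Perm.sign σ : ℝ) * ∏ i, A i (σ i) := by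
    rw [← Matrix.det_transpose, Matrix.det_apply]
    refine Finset.sum_congr rfl fun σ _ => ?_
    simp [Matrix.transpose_apply, zsmul_eq_mul, Units.smul_def]
  refine ⟨huniq, ?_⟩
  by_cases hz : ∀ σ : Equiv.Perm (Fin n), (∏ i, A i (σ i)) = 0
  · left
    rw [hdet]
    exact Finset.sum_eq_zero fun σ _ => by rw [hz σ, mul_zero]
  · right
    push_neg at hz
    obtain ⟨σ, hσ⟩ := hz
    refine ⟨σ, ?_⟩
    rw [hdet, Finset.sum_eq_single σ]
    · intro τ _ hτσ
      rcases eq_or_ne (∏ i, A i (τ i)) 0 with h | h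
      · rw [h, mul_zero]
      · exact absurd (huniq τ σ h hσ) hτσ
    · intro h; exact absurd (Finset.mem_univ σ) h
end
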